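/- The zeros of the polynomial H_n(x) = \sum_{j=0}^{\lfloor n/2 \rfloor} \binom{n-j}{j} x^j are exactly the numbers -\frac{1}{4}\sec^2(k\pi/(n+1)) for k = 1, 2, \ldots, \lfloor n/2 \rfloor. -/

import Mathlib

open Polynomial Finset Real

/-- Full-range version of the sum (extra terms vanish). -/
noncomputable def Saux (n : ℕ) (x : ℝ) : ℝ := ∑ j ∈ Finset.range (n + 1), ((n - j).choose j : ℝ) * x ^ j

lemma Saux_rec (n : ℕ) (x : ℝ) : Saux (n + 2) x = Saux (n + 1) x + x * Saux n x := by
  unfold Saux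
  rw [Finset.sum_range_succ' (fun j => ((n + 2 - j).choose j : ℝ) * x ^ j),
      Finset.sum_range_succ' (fun j => ((n + 1 - j).choose j : ℝ) * x ^ j),
      Finset.sum_range_succ (fun j => ((n + 2 - (j + 1)).choose (j + 1) : ℝ) * x ^ (j + 1)),
      Finset.mul_sum]
  have h0 : ((n + 2 - (n + 1 + 1)).choose (n + 1 + 1) : ℝ) = 0 := by
    simp [Nat.choose_eq_zero_of_lt]
  rw [h0]
  have : ∑ j ∈ Finset.range (n + 1), ((n + 2 - (j + 1)).choose (j + 1) : ℝ) * x ^ (j + 1)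
      = ∑ j ∈ Finset.range (n + 1),
        (((n + 1 - (j + 1)).choose (j + 1) : ℝ) * x ^ (j + 1)
          + x * (((n - j).choose j : ℝ) * x ^ j)) := by
    refine Finset.sum_congr rfl fun j hj => ?_
    have hj' : j ≤ n := by simpa using Nat.lt_succ_iff.mp (Finset.mem_range.mp hj)
    have h1 : n + 2 - (j + 1) = (n - j) + 1 := by omega
    have h2 : n + 1 - (j + 1) = n - j := by omega
    rw [h1, h2, Nat.choose_succ_succ']
    push_cast
    ring
  rw [this, Finset.sum_add_distrib]
  simp
  ring

lemma Saux_trig (θ : ℝ) (hc : Real.cos θ ≠ 0) (n : ℕ) :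
    Saux n (-(1 / 4) * (1 / Real.cos θ) ^ 2) * (Real.sin θ * (2 * Real.cos θ) ^ n)
      = Real.sin ((n + 1) * θ) := by
  induction n using Nat.twoStepInduction with
  | zero => simp [Saux]
  | one =>
    have h2 : Real.sin (2 * θ) = 2 * Real.sin θ * Real.cos θ := Real.sin_two_mul θ
    simp [Saux, Finset.sum_range_succ]
    push_cast
    rw [show ((1:ℝ) + 1) * θ = 2 * θ by ring, h2]
    ring
  | more n ih1 ih2 =>
    push_cast at ih1 ih2 ⊢
    rw [Saux_rec, add_mul]
    have e1 : Saux (n + 1) (-(1 / 4) * (1 / Real.cos θ) ^ 2) * (Real.sin θ * (2 * Real.cos θ) ^ (n + 2))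
        = Real.sin ((n + 1 + 1) * θ) * (2 * Real.cos θ) := by
      rw [← ih2]; ring
    have e2 : (-(1 / 4) * (1 / Real.cos θ) ^ 2 * Saux n (-(1 / 4) * (1 / Real.cos θ) ^ 2))
          * (Real.sin θ * (2 * Real.cos θ) ^ (n + 2))
        = - Real.sin ((n + 1) * θ) := by
      rw [← ih1]; field_simp; ring
    rw [e1, e2]
    have ha : ((n:ℝ) + 2 + 1) * θ = (n + 2) * θ + θ := by ring
    have hb : ((n:ℝ) + 1 + 1) * θ = (n + 2) * θ := by ring
    have hcc : ((n:ℝ) + 1) * θ = (n + 2) * θ - θ := by ring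
    push_cast
    rw [ha, hb, hcc, Real.sin_add, Real.sin_sub]
    ring

theorem stmt_2 (n : ℕ) (hn : 0 < n) :
    let H : Polynomial ℝ := ∑ j ∈ Finset.range (n / 2 + 1), C (((n - j).choose j : ℝ)) * X ^ j
    ∀ z : ℂ, aeval z H = 0 ↔
      ∃ k ∈ Finset.Icc 1 (n / 2),
        z = (-(1 / 4) * (1 / Real.cos (k * Real.pi / (n + 1))) ^ 2 : ℝ) := by
  intro H z
  set m := n / 2 with hm
  set r : ℕ → ℝ := fun k => -(1 / 4) * (1 / Real.cos (k * Real.pi / (n + 1))) ^ 2 with hr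
  -- angle facts
  have hθ : ∀ k ∈ Finset.Icc 1 m, 0 < (k : ℝ) * Real.pi / (n + 1) ∧
      (k : ℝ) * Real.pi / (n + 1) < Real.pi / 2 := by
    intro k hk
    obtain ⟨hk1, hk2⟩ := Finset.mem_Icc.mp hk
    constructor
    · positivity
    · rw [div_lt_div_iff₀ (by positivity) (by norm_num)]
      have h2k : 2 * k ≤ n := by omega
      have h2k' : (2 : ℝ) * k ≤ n := by exact_mod_cast h2k
      nlinarith [Real.pi_pos]
  have hcos : ∀ k ∈ Finset.Icc 1 m, 0 < Real.cos ((k : ℝ) * Real.pi / (n + 1)) := by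
    intro k hk
    obtain ⟨h1, h2⟩ := hθ k hk
    exact Real.cos_pos_of_mem_Ioo ⟨by linarith [Real.pi_pos], h2⟩
  have hsin : ∀ k ∈ Finset.Icc 1 m, 0 < Real.sin ((k : ℝ) * Real.pi / (n + 1)) := by
    intro k hk
    obtain ⟨h1, h2⟩ := hθ k hk
    exact Real.sin_pos_of_pos_of_lt_pi h1 (by linarith [Real.pi_pos])
  -- evaluation of H equals Saux
  have hevalH : ∀ x : ℝ, Polynomial.eval x H = Saux n x := by
    intro x
    have hsub : Finset.range (m + 1) ⊆ Finset.range (n + 1) :=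
      Finset.range_subset_range.mpr (by omega)
    rw [show Polynomial.eval x H = ∑ j ∈ Finset.range (m + 1), ((n - j).choose j : ℝ) * x ^ j by
      simp [H, Polynomial.eval_finset_sum]; rfl]
    unfold Saux
    refine Finset.sum_subset hsub fun j hj hj' => ?_
    have : n - j < j := by
      simp only [Finset.mem_range] at hj hj'
      omega
    simp [Nat.choose_eq_zero_of_lt this]
  -- each r k is a root
  have hroot : ∀ k ∈ Finset.Icc 1 m, Polynomial.eval (r k) H = 0 := by
    intro k hk
    have hc := hcos k hk
    have hs := hsin k hk
    have key := Saux_trig ((k : ℝ) * Real.pi / (n + 1)) (ne_of_gt hc) n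
    have hzero : Real.sin (((n : ℝ) + 1) * ((k : ℝ) * Real.pi / (n + 1))) = 0 := by
      rw [show ((n : ℝ) + 1) * ((k : ℝ) * Real.pi / (n + 1)) = k * Real.pi by
        field_simp]
      exact Real.sin_nat_mul_pi k
    rw [hzero] at key
    have hne : Real.sin ((k : ℝ) * Real.pi / (n + 1)) *
        (2 * Real.cos ((k : ℝ) * Real.pi / (n + 1))) ^ n ≠ 0 := by positivity
    have := mul_eq_zero.mp key
    rw [hevalH]
    tauto
  -- degree facts
  have hcoeffm : H.coeff m = ((n - m).choose m : ℝ) := by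
    simp [H, Polynomial.finset_sum_coeff, Polynomial.coeff_C_mul, Polynomial.coeff_X_pow]
    intro h; omega
  have hchoosepos : 0 < (n - m).choose m := Nat.choose_pos (by omega)
  have hcoeffne : H.coeff m ≠ 0 := by
    rw [hcoeffm]; exact_mod_cast hchoosepos.ne'
  have hHne : H ≠ 0 := fun h => hcoeffne (by simp [h])
  have hdeg : H.natDegree = m := by
    refine le_antisymm ?_ (Polynomial.le_natDegree_of_ne_zero hcoeffne)
    refine Polynomial.natDegree_sum_le_of_forall_le _ _ fun j hj => ?_
    exact (Polynomial.natDegree_C_mul_X_pow_le _ _).trans (by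
      simp only [Finset.mem_range] at hj; omega)
  -- complex polynomial
  set P : Polynomial ℂ := H.map (algebraMap ℝ ℂ) with hP
  have hPne : P ≠ 0 := (Polynomial.map_ne_zero hHne)
  have hPdeg : P.natDegree = m := by
    rw [hP, Polynomial.natDegree_map]; exact hdeg
  -- injectivity of r on Icc
  have hrinj : Set.InjOn (fun k : ℕ => ((r k : ℝ) : ℂ)) (Finset.Icc 1 m) := by
    intro a ha b hb hab
    have hab' : r a = r b := by simpa using hab
    have hca := hcos a ha
    have hcb := hcos b hb
    have h1 : (1 / Real.cos ((a : ℝ) * Real.pi / (n + 1))) ^ 2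
        = (1 / Real.cos ((b : ℝ) * Real.pi / (n + 1))) ^ 2 := by
      have := hab'
      simp only [hr] at this
      nlinarith [this]
    have h2 : (1 : ℝ) / Real.cos ((a : ℝ) * Real.pi / (n + 1))
        = 1 / Real.cos ((b : ℝ) * Real.pi / (n + 1)) := by
      have hpa : 0 < (1 : ℝ) / Real.cos ((a : ℝ) * Real.pi / (n + 1)) := by positivity
      have hpb : 0 < (1 : ℝ) / Real.cos ((b : ℝ) * Real.pi / (n + 1)) := by positivity
      nlinarith [h1]
    have h3 : Real.cos ((a : ℝ) * Real.pi / (n + 1)) = Real.cos ((b : ℝ) * Real.pi / (n + 1)) := by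
      rw [one_div, one_div, inv_inj] at h2
      exact h2
    have h4 : (a : ℝ) * Real.pi / (n + 1) = (b : ℝ) * Real.pi / (n + 1) := by
      have hamem : (a : ℝ) * Real.pi / (n + 1) ∈ Set.Icc 0 Real.pi := by
        obtain ⟨x1, x2⟩ := hθ a ha
        constructor <;> [linarith; linarith [Real.pi_pos]]
      have hbmem : (b : ℝ) * Real.pi / (n + 1) ∈ Set.Icc 0 Real.pi := by
        obtain ⟨x1, x2⟩ := hθ b hb
        constructor <;> [linarith; linarith [Real.pi_pos]]
      exact Real.injOn_cos hamem hbmem h3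
    have hpi := Real.pi_ne_zero
    rw [div_left_inj' (by positivity), mul_left_inj' hpi] at h4
    exact_mod_cast h4
  -- root finset
  set Sf : Finset ℂ := (Finset.Icc 1 m).image (fun k : ℕ => ((r k : ℝ) : ℂ)) with hSf
  have hcardSf : Sf.card = m := by
    rw [hSf, Finset.card_image_of_injOn hrinj, Nat.card_Icc]; omega
  have hmem : ∀ w ∈ Sf, w ∈ P.roots := by
    intro w hw
    obtain ⟨k, hk, rfl⟩ := Finset.mem_image.mp hw
    rw [Polynomial.mem_roots hPne]
    show Polynomial.eval _ P = 0
    rw [hP, Polynomial.eval_map,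
      show ((r k : ℝ) : ℂ) = algebraMap ℝ ℂ (r k) from rfl, Polynomial.eval₂_at_apply,
      hroot k hk]
    simp
  have hle : Sf.val ≤ P.roots := (Multiset.le_iff_subset Sf.nodup).mpr hmem
  have hroots : P.roots = Sf.val := by
    refine (Multiset.eq_of_le_of_card_le hle ?_).symm
    have := Polynomial.card_roots' P
    rw [hPdeg] at this
    simpa [hcardSf] using this
  -- conclude
  have haz : aeval z H = Polynomial.eval z P := by
    rw [hP, Polynomial.eval_map, Polynomial.aeval_def]
  rw [haz]
  constructor
  · intro h
    have : z ∈ P.roots := Polynomial.mem_roots hPne |>.mpr h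
    rw [hroots] at this
    obtain ⟨k, hk, hkz⟩ := Finset.mem_image.mp (Finset.mem_val.mp this)
    exact ⟨k, hk, hkz.symm⟩
  · rintro ⟨k, hk, rfl⟩
    have : ((r k : ℝ) : ℂ) ∈ P.roots := hmem _ (Finset.mem_image_of_mem _ hk)
    exact (Polynomial.mem_roots hPne).mp this
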